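/- Let n be a natural number and let A, 𝔚, R, M : ℝ → Matrix (Fin n) (Fin n) ℝ be such that A is twice differentiable with A(t) invertible for every t, 𝔚 is differentiable with 𝔚(t) skew-symmetric (𝔚(t)ᵀ = −𝔚(t)) for every t, and A″(t) + 2A′(t)·𝔚(t) + A(t)·𝔚′(t) + A(t)·𝔚(t)² + A(t)·(R(t) − M(t)) = 0 for every t. Define N(t) = A(t)⁻¹·A′(t) + 𝔚(t). Then N is differentiable and satisfies the matrix Riccati equation N′(t) = −N(t)² − N(t)·𝔚(t) − 𝔚(t)ᵀ·N(t) − R(t) + M(t) for every t ∈ ℝ. -/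

import Mathlib

open Matrix

attribute [local instance] Matrix.normedAddCommGroup Matrix.normedSpace

lemma hasDerivAt_matrix {n : ℕ} {f : ℝ → Matrix (Fin n) (Fin n) ℝ}
    {f' : Matrix (Fin n) (Fin n) ℝ}
    {t : ℝ} : HasDerivAt f f' t ↔ ∀ i j, HasDerivAt (fun s => f s i j) (f' i j) t := by
  exact hasDerivAt_pi.trans (forall_congr' fun i => hasDerivAt_pi)

lemma HasDerivAt.matrix_mul {n : ℕ} {f g : ℝ → Matrix (Fin n) (Fin n) ℝ}
    {f' g' : Matrix (Fin n) (Fin n) ℝ} {t : ℝ}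
    (hf : HasDerivAt f f' t) (hg : HasDerivAt g g' t) :
    HasDerivAt (fun s => f s * g s) (f' * g t + f t * g') t := by
  rw [hasDerivAt_matrix] at hf hg ⊢
  intro i j
  simp only [Matrix.mul_apply, Matrix.add_apply]
  rw [← Finset.sum_add_distrib]
  exact HasDerivAt.fun_sum fun k _ => by
    simpa [mul_comm] using ((hf i k).fun_mul (hg k j))

lemma differentiableAt_det {n : ℕ} {f : ℝ → Matrix (Fin n) (Fin n) ℝ} {t : ℝ}
    (hf : ∀ i j, DifferentiableAt ℝ (fun s => f s i j) t) :
    DifferentiableAt ℝ (fun s => (f s).det) t := by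
  simp only [Matrix.det_apply']
  exact DifferentiableAt.fun_sum fun σ _ =>
    ((DifferentiableAt.fun_finsetProd (fun i _ => hf (σ i) i))).const_mul _

lemma differentiableAt_matrix_inv {n : ℕ} {f : ℝ → Matrix (Fin n) (Fin n) ℝ} {t : ℝ}
    (hf : HasDerivAt f (deriv f t) t) (hunit : ∀ s, IsUnit (f s)) :
    DifferentiableAt ℝ (fun s => (f s)⁻¹) t := by
  have hf' : ∀ i j, DifferentiableAt ℝ (fun s => f s i j) t := fun i j =>
    ((hasDerivAt_matrix.mp hf) i j).differentiableAt
  have hdet : ∀ s, (f s).det ≠ 0 := fun s =>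
    (Matrix.isUnit_iff_isUnit_det _).mp (hunit s) |>.ne_zero
  have : (fun s => (f s)⁻¹) = fun s => ((f s).det)⁻¹ • (f s).adjugate := by
    funext s
    rw [Matrix.inv_def, Ring.inverse_eq_inv']
  rw [this]
  refine differentiableAt_pi.mpr fun i => ?_
  refine differentiableAt_pi.mpr fun j => ?_
  simp only [Matrix.smul_apply, smul_eq_mul, Matrix.adjugate_apply]
  refine DifferentiableAt.mul ((differentiableAt_det hf').inv (hdet t)) ?_
  refine differentiableAt_det fun k l => ?_
  by_cases hk : k = j
  · subst hk; simp only [Matrix.updateRow_self]; exact differentiableAt_const _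
  · simp only [Matrix.updateRow_ne hk]; exact hf' k l

lemma riccati_algebra {α : Type*} [Ring α] (a a' a'' w w' r m b : α)
    (hba : b * a = 1)
    (hode : a'' + 2 • (a' * w) + a * w' + a * w ^ 2 + a * (r - m) = 0) :
    -(b * a' * b) * a' + b * a'' + w' =
      -(b * a' + w) ^ 2 - (b * a' + w) * w - (-w) * (b * a' + w) - r + m := by
  have ha'' : a'' = -(2 • (a' * w) + (a * w' + (a * w ^ 2 + a * (r - m)))) := by
    rw [add_assoc, add_assoc, add_assoc] at hode
    exact eq_neg_of_add_eq_zero_left hode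
  rw [ha'']
  simp only [mul_neg, mul_add, mul_smul_comm, ← mul_assoc, hba, one_mul]
  noncomm_ring

/-- If `Φ_t = A(t)V(t)` satisfies the second-order linear matrix ODE
`A″ + 2A′𝔚 + A𝔚′ + A𝔚² + A(R − M) = 0` with `𝔚(t)` skew-symmetric, then
`N(t) = A(t)⁻¹A′(t) + 𝔚(t)` satisfies the matrix Riccati equation
`N′ = −N² − N𝔚 − 𝔚ᵀN − R + M`. -/
theorem riccati_of_second_order_ode (n : ℕ)
    (A A' A'' 𝔚 𝔚' R M : ℝ → Matrix (Fin n) (Fin n) ℝ)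
    (hA : ∀ t : ℝ, HasDerivAt A (A' t) t)
    (hA' : ∀ t : ℝ, HasDerivAt A' (A'' t) t)
    (hAinv : ∀ t : ℝ, IsUnit (A t))
    (h𝔚 : ∀ t : ℝ, HasDerivAt 𝔚 (𝔚' t) t)
    (h𝔚skew : ∀ t : ℝ, (𝔚 t)ᵀ = -(𝔚 t))
    (hODE : ∀ t : ℝ,
      A'' t + 2 • (A' t * 𝔚 t) + A t * 𝔚' t + A t * (𝔚 t) ^ 2
        + A t * (R t - M t) = 0) :
    ∀ t : ℝ,
      HasDerivAt (fun s => (A s)⁻¹ * A' s + 𝔚 s)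
        (-((A t)⁻¹ * A' t + 𝔚 t) ^ 2 - ((A t)⁻¹ * A' t + 𝔚 t) * 𝔚 t
          - (𝔚 t)ᵀ * ((A t)⁻¹ * A' t + 𝔚 t) - R t + M t) t := by
  intro t
  have hdet : ∀ s, IsUnit (A s).det := fun s => (Matrix.isUnit_iff_isUnit_det _).mp (hAinv s)
  set B : ℝ → Matrix (Fin n) (Fin n) ℝ := fun s => (A s)⁻¹ with hBdef
  have hB : HasDerivAt B (deriv B t) t :=
    (differentiableAt_matrix_inv ((hA t).congr_deriv ((hA t).deriv).symm) hAinv).hasDerivAt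
  have hBA : B t * A t = 1 := Matrix.nonsing_inv_mul _ (hdet t)
  -- derivative of A * B = 1 gives the formula for deriv B t
  have h1 : A' t * B t + A t * deriv B t = 0 := by
    have h2 : HasDerivAt (fun s => A s * B s) (A' t * B t + A t * deriv B t) t :=
      (hA t).matrix_mul hB
    have h3 : (fun s => A s * B s) = fun _ => (1 : Matrix (Fin n) (Fin n) ℝ) :=
      funext fun s => Matrix.mul_nonsing_inv _ (hdet s)
    rw [h3] at h2
    exact h2.unique (hasDerivAt_const t 1)
  have hB' : deriv B t = -(B t * A' t * B t) := by
    have h4 := congrArg (fun Z => B t * Z) h1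
    simp only [mul_add, mul_zero, ← mul_assoc, hBA, one_mul] at h4
    rw [add_comm] at h4
    exact eq_neg_of_add_eq_zero_left h4
  have hN : HasDerivAt (fun s => B s * A' s + 𝔚 s)
      (deriv B t * A' t + B t * A'' t + 𝔚' t) t :=
    (hB.matrix_mul (hA' t)).add (h𝔚 t)
  rw [hB'] at hN
  convert hN using 1
  rw [h𝔚skew t]
  exact (riccati_algebra (A t) (A' t) (A'' t) (𝔚 t) (𝔚' t) (R t) (M t) (B t) hBA (hODE t)).symm
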